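/- Let p be a Miller tree and S an infinite subset of ω. In the game G(p,S) where player I builds an increasing chain s_0 ⊊ s_1 ⊊ ... of splitting nodes of p with s_{i+1}(|s_i|) ∈ S and s_{i+1}(|s_i|) > r_i, and player II plays natural numbers r_i, player II has a winning strategy if and only if there is H : Split(p) → ω such that for every branch f ∈ [p], the set {n : f↾n ∈ Split(p) and f(n) ∈ S} is, except for finitely many elements, contained in {n : f↾n ∈ Split(p) and f(n) < H(f↾n)}. -/
import Mathlib


/-- The restriction `f↾n` of `f : ω → ω`, as a finite sequence. -/
def res (f : ℕ → ℕ) (n : ℕ) : List ℕ := (List.range n).map f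

/-- A tree on `ω`: a set of finite sequences closed under initial segments. -/
def IsTree (T : Set (List ℕ)) : Prop := ∀ s ∈ T, ∀ t, t <+: s → t ∈ T

/-- The successor set `suc_T(s) = {n : s⌢n ∈ T}`. -/
def sucT (T : Set (List ℕ)) (s : List ℕ) : Set ℕ := {n | s ++ [n] ∈ T}

/-- `f ∈ [T]` is a branch of `T`. -/
def IsBranch (T : Set (List ℕ)) (f : ℕ → ℕ) : Prop := ∀ n, res f n ∈ T

/-- A Miller (superperfect) tree: a nonempty tree of strictly increasing sequences in
which every node extends to an infinitely-splitting node. -/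
def IsMiller (p : Set (List ℕ)) : Prop :=
  p.Nonempty ∧ IsTree p ∧ (∀ s ∈ p, List.Chain' (· < ·) s) ∧
    ∀ s ∈ p, ∃ t ∈ p, s <+: t ∧ (sucT p t).Infinite

/-- The (infinitely-)splitting nodes of `p`. -/
def SplitNodes (p : Set (List ℕ)) : Set (List ℕ) := {s | s ∈ p ∧ (sucT p s).Infinite}

/-- `Sp(p,f) = {f(n) : f↾n ∈ Split(p)}`. -/
def Sp (p : Set (List ℕ)) (f : ℕ → ℕ) : Set ℕ :=
  {m | ∃ n, res f n ∈ SplitNodes p ∧ f n = m}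

/-- `[p]_split = {Sp(p,f) : f ∈ [p]}`. -/
def splitSets (p : Set (List ℕ)) : Set (Set ℕ) := {X | ∃ f, IsBranch p f ∧ X = Sp p f}

/-- `play` is an infinite legal run of the game `G(p,S)` in which player I builds an
increasing chain of splitting nodes of `p` against the strategy `σ` of player II:
each new node takes a value in `S` exceeding II's last move at the first new
coordinate. -/
def LegalPlay (p : Set (List ℕ)) (S : Set ℕ) (σ : List (List ℕ) → ℕ)
    (play : ℕ → List ℕ) : Prop :=
  (∀ i, play i ∈ SplitNodes p) ∧
  ∀ i, play i <+: play (i + 1) ∧ (play i).length < (play (i + 1)).length ∧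
    (play (i + 1)).getD (play i).length 0 ∈ S ∧
    σ (List.ofFn (fun j : Fin (i + 1) => play j)) <
      (play (i + 1)).getD (play i).length 0


lemma res_length (f : ℕ → ℕ) (n : ℕ) : (res f n).length = n := by simp [res]

lemma res_getD {f : ℕ → ℕ} {j n : ℕ} (h : j < n) : (res f n).getD j 0 = f j := by
  rw [List.getD_eq_getElem _ _ (by simpa [res_length] using h)]
  simp [res]

lemma res_take {f : ℕ → ℕ} {n m : ℕ} (h : n ≤ m) : (res f m).take n = res f n := by
  simp [res, ← List.map_take, List.take_range, Nat.min_eq_left h]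

lemma res_prefix {f : ℕ → ℕ} {n m : ℕ} (h : n ≤ m) : res f n <+: res f m := by
  rw [← res_take h]; exact List.take_prefix _ _

lemma pref_getD {a b : List ℕ} (h : a <+: b) {j : ℕ} (hj : j < a.length) :
    b.getD j 0 = a.getD j 0 := by
  obtain ⟨c, rfl⟩ := h
  exact List.getD_append _ _ _ _ hj

lemma le_foldr_max {a : ℕ} {l : List ℕ} (h : a ∈ l) : a ≤ l.foldr max 0 := by
  induction l with
  | nil => simp at h
  | cons b l ih =>
    rcases List.mem_cons.1 h with rfl | h
    · exact le_max_left _ _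
    · exact le_trans (ih h) (le_max_right _ _)

lemma ofFn_sublist_range {n : ℕ → ℕ} (hn : StrictMono n) (i : ℕ) :
    (List.ofFn (fun j : Fin i => n j)).Sublist (List.range (n i)) := by
  induction i with
  | zero => simp
  | succ i ih =>
    rw [List.ofFn_succ']
    have h1 : (List.ofFn fun j : Fin i => n j.castSucc).Sublist (List.range (n i)) := by
      simpa using ih
    have h2 : (List.range (n i + 1)).Sublist (List.range (n (i+1))) :=
      List.range_sublist.2 (hn (Nat.lt_succ_self i))
    have h3 : ((List.ofFn fun j : Fin i => n j.castSucc).concat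
        (n (Fin.last i))).Sublist (List.range (n i + 1)) := by
      rw [List.range_succ]
      simpa [List.concat_eq_append] using h1.append (List.Sublist.refl [n (Fin.last i)])
    exact h3.trans h2
/-- Player II has a winning strategy in `G(p,S)` iff there is `H : Split(p) → ω` such
that for every branch `f ∈ [p]` the set `{n : f↾n ∈ Split(p), f(n) ∈ S}` is almost
contained in `{n : f↾n ∈ Split(p), f(n) < H(f↾n)}`. -/
theorem stmt8 (p : Set (List ℕ)) (hp : IsMiller p) (S : Set ℕ) (hS : S.Infinite) :
    (∃ σ : List (List ℕ) → ℕ, ∀ play : ℕ → List ℕ, ¬ LegalPlay p S σ play) ↔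
    (∃ H : List ℕ → ℕ, ∀ f, IsBranch p f →
      {n | res f n ∈ SplitNodes p ∧ f n ∈ S ∧ ¬ f n < H (res f n)}.Finite) := by
  constructor
  · rintro ⟨σ, hσ⟩
    refine ⟨fun s => ((List.range s.length).sublists.map
        (fun ks => σ (ks.map s.take ++ [s]))).foldr max 0 + 1, fun f hf => ?_⟩
    by_contra hinf
    have hinf' : {n | res f n ∈ SplitNodes p ∧ f n ∈ S ∧
        ¬ f n < ((List.range (res f n).length).sublists.map
          (fun ks => σ (ks.map (res f n).take ++ [res f n]))).foldr max 0 + 1}.Infinite := hinf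
    have hmono := Nat.nth_strictMono hinf'
    have hmem := Nat.nth_mem_of_infinite hinf'
    set nn := Nat.nth (fun n => res f n ∈ SplitNodes p ∧ f n ∈ S ∧
        ¬ f n < ((List.range (res f n).length).sublists.map
          (fun ks => σ (ks.map (res f n).take ++ [res f n]))).foldr max 0 + 1) with hnn
    apply hσ (fun i => res f (nn i))
    refine ⟨fun i => (hmem i).1, fun i => ?_⟩
    have h01 : nn i < nn (i + 1) := hmono (Nat.lt_succ_self i)
    refine ⟨res_prefix h01.le, by simpa [res_length] using h01, ?_, ?_⟩
    · rw [res_length, res_getD h01]; exact (hmem i).2.1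
    · rw [res_length, res_getD h01]
      have hnotlt := (hmem i).2.2
      have hks : (List.ofFn (fun j : Fin i => nn j)) ∈
          (List.range (res f (nn i)).length).sublists := by
        rw [List.mem_sublists, res_length]
        exact ofFn_sublist_range hmono i
      have heq : List.ofFn (fun j : Fin (i + 1) => res f (nn j)) =
          (List.ofFn (fun j : Fin i => nn j)).map (res f (nn i)).take ++ [res f (nn i)] := by
        rw [List.ofFn_succ' (fun j : Fin (i + 1) => res f (nn j)), List.concat_eq_append,
          List.map_ofFn]
        congr 1
        · refine congrArg List.ofFn (funext fun j => ?_)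
          show res f (nn j.castSucc) = (res f (nn i)).take (nn j)
          rw [res_take (hmono j.isLt).le, Fin.coe_castSucc]
      rw [heq]
      have hle : σ ((List.ofFn (fun j : Fin i => nn j)).map (res f (nn i)).take
          ++ [res f (nn i)]) ≤
          ((List.range (res f (nn i)).length).sublists.map
            (fun ks => σ (ks.map (res f (nn i)).take ++ [res f (nn i)]))).foldr max 0 :=
        le_foldr_max (List.mem_map.2 ⟨_, hks, rfl⟩)
      exact lt_of_lt_of_le (Nat.lt_succ_of_le hle) (not_lt.1 hnotlt)
  · rintro ⟨H, hH⟩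
    refine ⟨fun L => H (L.getLastD []), fun play hpl => ?_⟩
    obtain ⟨hsplit, hstep⟩ := hpl
    have hpref : ∀ i j, i ≤ j → play i <+: play j := by
      intro i j hij
      induction j, hij using Nat.le_induction with
      | base => exact List.prefix_refl _
      | succ k hk ih => exact ih.trans (hstep k).1
    have hlen : ∀ i, i ≤ (play i).length := by
      intro i
      induction i with
      | zero => exact Nat.zero_le _
      | succ k ih => exact Nat.lt_of_le_of_lt ih (hstep k).2.1
    have hlt : StrictMono fun i => (play i).length :=
      strictMono_nat_of_lt_succ fun i => (hstep i).2.1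
    set f := fun m => (play (m + 1)).getD m 0 with hfdef
    have hfk : ∀ k m, m < (play k).length → f m = (play k).getD m 0 := by
      intro k m hm
      have hm1 : m < (play (m + 1)).length := lt_of_lt_of_le (Nat.lt_succ_self m) (hlen (m + 1))
      rcases le_total (m + 1) k with h | h
      · exact (pref_getD (hpref _ _ h) hm1).symm
      · exact pref_getD (hpref _ _ h) hm
    have hres : ∀ k n, n ≤ (play k).length → res f n = (play k).take n := by
      intro k n hn
      refine List.ext_getElem (by simp [res_length, Nat.min_eq_left hn]) fun j h1 h2 => ?_
      have hj : j < n := by simpa [res_length] using h1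
      rw [List.getElem_take]
      have hv := hfk k j (lt_of_lt_of_le hj hn)
      rw [← List.getD_eq_getElem (res f n) 0 h1, res_getD hj, hv,
        List.getD_eq_getElem]
    have hbranch : IsBranch p f := by
      intro n
      rw [hres n n (hlen n)]
      exact hp.2.1 _ (hsplit n).1 _ (List.take_prefix _ _)
    have hbad : ∀ i, (play i).length ∈
        {n | res f n ∈ SplitNodes p ∧ f n ∈ S ∧ ¬ f n < H (res f n)} := by
      intro i
      have hres_i : res f (play i).length = play i := by
        rw [hres i _ le_rfl, List.take_length]
      have hfval : f (play i).length = (play (i + 1)).getD (play i).length 0 :=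
        hfk (i + 1) _ (hstep i).2.1
      have hσ := (hstep i).2.2.2
      have hlast : (List.ofFn (fun j : Fin (i + 1) => play j)).getLastD [] = play i := by
        rw [List.ofFn_succ', List.concat_eq_append, List.getLastD_concat]
        simp
      have hσ2 : H ((List.ofFn fun j : Fin (i + 1) => play j).getLastD []) <
          (play (i + 1)).getD (play i).length 0 := hσ
      rw [hlast] at hσ2
      refine ⟨by rw [hres_i]; exact hsplit i, by rw [hfval]; exact (hstep i).2.2.1, ?_⟩
      rw [hres_i, hfval]
      exact Nat.lt_asymm hσ2
    exact (Set.infinite_of_injective_forall_mem hlt.injective hbad) (hH f hbranch)
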